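/- Let φ = (1+√5)/2, let 2φ < β < 4, and let T : ℝ → ℝ be defined by T(x) = x + 2 if x ≤ 0 and T(x) = β − φ·x if x > 0. Set A = 1/(10−4φ) and let μ be the measure on ℝ with density ρ with respect to Lebesgue measure, where ρ(x) = A/φ³ for x ∈ (β(1−φ), 2(β−2φ−1)), ρ(x) = A/φ² for x ∈ (2(β−2φ−1), β(1−φ)+2), ρ(x) = A/φ for x ∈ (β(1−φ)+2, β−2φ), ρ(x) = A for x ∈ (β−2φ, 2β−4φ), ρ(x) = A for x ∈ (2β−4φ, β(1−φ)+4), ρ(x) = (1/φ³ + 1)·A for x ∈ (β(1−φ)+4, 2), ρ(x) = A/φ for x ∈ (2, β(1−φ)+2φ²), ρ(x) = A/φ² for x ∈ (β(1−φ)+2φ², β), and ρ(x) = 0 otherwise. Then μ is a probability measure and μ is T-invariant. -/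

import Mathlib

open MeasureTheory Set

lemma map_withDensity_aux (g ginv : ℝ → ℝ) (hg : Measurable g) (hginv : Measurable ginv)
    (hgi : ∀ x, ginv (g x) = x) (ν : Measure ℝ) (f : ℝ → ENNReal) (hf : Measurable f) :
    (ν.withDensity f).map g = (ν.map g).withDensity (fun y => f (ginv y)) := by
  ext s hs
  rw [Measure.map_apply hg hs, withDensity_apply _ (hg hs), withDensity_apply _ hs,
      setLIntegral_map hs (show Measurable fun y => f (ginv y) from hf.comp hginv) hg]
  exact setLIntegral_congr_fun (hg hs) (fun x _ => by rw [hgi x])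

set_option maxHeartbeats 2000000 in
theorem invariant_density_s_phi_plateau (φ β A : ℝ) (hφ : φ = (1 + Real.sqrt 5) / 2)
    (hβ₁ : 2 * φ < β) (hβ₂ : β < 4) (hA : A = 1 / (10 - 4 * φ))
    (T : ℝ → ℝ) (hT : T = fun x => if x ≤ 0 then x + 2 else β - φ * x)
    (ρ : ℝ → ENNReal)
    (hρ : ρ = fun x =>
      if x ∈ Ioo (β * (1 - φ)) (2 * (β - 2 * φ - 1)) then ENNReal.ofReal (A / φ ^ 3)
      else if x ∈ Ioo (2 * (β - 2 * φ - 1)) (β * (1 - φ) + 2) then ENNReal.ofReal (A / φ ^ 2)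
      else if x ∈ Ioo (β * (1 - φ) + 2) (β - 2 * φ) then ENNReal.ofReal (A / φ)
      else if x ∈ Ioo (β - 2 * φ) (2 * β - 4 * φ) then ENNReal.ofReal A
      else if x ∈ Ioo (2 * β - 4 * φ) (β * (1 - φ) + 4) then ENNReal.ofReal A
      else if x ∈ Ioo (β * (1 - φ) + 4) 2 then ENNReal.ofReal ((1 / φ ^ 3 + 1) * A)
      else if x ∈ Ioo (2 : ℝ) (β * (1 - φ) + 2 * φ ^ 2) then ENNReal.ofReal (A / φ)
      else if x ∈ Ioo (β * (1 - φ) + 2 * φ ^ 2) β then ENNReal.ofReal (A / φ ^ 2)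
      else 0)
    (μ : Measure ℝ) (hμ : μ = volume.withDensity ρ) :
    IsProbabilityMeasure μ ∧ μ.map T = μ := by
  have h5 : Real.sqrt 5 ^ 2 = 5 := Real.sq_sqrt (by norm_num)
  have h22 : (2.2 : ℝ) < Real.sqrt 5 := (Real.lt_sqrt (by norm_num)).mpr (by norm_num)
  have h23 : Real.sqrt 5 < 2.3 := (Real.sqrt_lt' (by norm_num)).mpr (by norm_num)
  have hφgt : (1.6 : ℝ) < φ := by rw [hφ]; linarith
  have hφlt : φ < 1.65 := by rw [hφ]; linarith
  have hφpos : (0:ℝ) < φ := by linarith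
  have hφne : φ ≠ 0 := ne_of_gt hφpos
  have hφ2 : φ ^ 2 = φ + 1 := by rw [hφ]; linear_combination h5 / 4
  have h10pos : (0:ℝ) < 10 - 4 * φ := by linarith
  have hApos : 0 < A := by rw [hA]; positivity
  have hβφ : 2 * φ * φ < β * φ := mul_lt_mul_of_pos_right hβ₁ hφpos
  have hβφ4 : β * φ < 4 * φ := mul_lt_mul_of_pos_right hβ₂ hφpos
  set b0 := β * (1 - φ) with hb0
  set b1 := 2 * (β - 2 * φ - 1) with hb1
  set b3 := β - 2 * φ with hb3
  set b4 := 2 * β - 4 * φ with hb4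
  set b2 := b0 + 2 with hb2
  set b5 := b0 + 4 with hb5
  set b7 := b0 + 2 * φ ^ 2 with hb7
  -- ordering facts
  have h01 : b0 < b1 := by rw [hb0, hb1, hb3]; nlinarith [hβφ, hφ2]
  have h12 : b1 < b2 := by rw [hb1, hb2, hb0, hb3]; nlinarith [hβφ4]
  have h2neg : b2 < 0 := by rw [hb2, hb0]; nlinarith [hβφ, hφ2]
  have h3pos : (0:ℝ) < b3 := by rw [hb3]; linarith
  have h23' : b2 < b3 := h2neg.trans h3pos
  have h34 : b3 < b4 := by rw [hb3, hb4]; linarith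
  have h45 : b4 < b5 := by rw [hb4, hb5, hb0]; nlinarith [hβφ4]
  have h56 : b5 < 2 := by rw [hb5]; have h := h2neg; rw [hb2] at h; linarith
  have h67 : (2:ℝ) < b7 := by rw [hb7, hb0]; nlinarith [hβφ4, hβ₁, hφ2]
  have h78 : b7 < β := by rw [hb7, hb0]; nlinarith [hβφ, hφ2]
  have h42 : b4 < 2 := by rw [hb4]; linarith
  have h0neg : b0 < -2 := by have h := h2neg; rw [hb2] at h; linarith
  have h1neg : b1 < 0 := h12.trans h2neg
  have h3lt2 : b3 < 2 := by rw [hb3]; linarith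
  have hβ2 : (2:ℝ) < β := by linarith
  -- algebraic identities
  have hid1 : β - φ * b3 = b7 := by rw [hb3, hb7, hb0]; ring
  have hid2 : φ * b5 = 4 * φ - β := by rw [hb5, hb0]; linear_combination (-β) * hφ2
  have hid3 : φ * b7 = 4 * φ + 2 - β := by
    rw [hb7, hb0]; linear_combination (2 * φ + 2 - β) * hφ2
  have hid4 : b1 + 2 = b4 := by rw [hb1, hb4, hb3]; ring
  have hid5 : b5 ≤ β - φ * b4 := by rw [hb5, hb4, hb0]; nlinarith [hβφ4, hφ2]
  -- scalar identities
  have hinv : φ⁻¹ = φ - 1 := inv_eq_of_mul_eq_one_right (by linear_combination hφ2)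
  have f1 : A / φ ^ 3 = A * (2 * φ - 3) := by
    rw [div_eq_iff (pow_ne_zero 3 hφne)]
    linear_combination (-A * (2 * φ ^ 2 - φ + 1)) * hφ2
  have f2 : A / φ ^ 2 = A * (2 - φ) := by
    rw [div_eq_iff (pow_ne_zero 2 hφne)]
    linear_combination (A * (φ - 1)) * hφ2
  have f3 : A / φ = A * (φ - 1) := by
    rw [div_eq_iff hφne]; linear_combination (-A) * hφ2
  have f6 : (1 / φ ^ 3 + 1) * A = A * (2 * φ - 2) := by
    have h13 : 1 / φ ^ 3 = 2 * φ - 3 := by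
      rw [div_eq_iff (pow_ne_zero 3 hφne)]
      linear_combination (-(2 * φ ^ 2 - φ + 1)) * hφ2
    rw [h13]; ring
  have hAid : A * (10 - 4 * φ) = 1 := by rw [hA]; field_simp
  -- measurability of ρ
  have hρm : Measurable ρ := by
    rw [hρ]
    apply Measurable.ite measurableSet_Ioo measurable_const
    apply Measurable.ite measurableSet_Ioo measurable_const
    apply Measurable.ite measurableSet_Ioo measurable_const
    apply Measurable.ite measurableSet_Ioo measurable_const
    apply Measurable.ite measurableSet_Ioo measurable_const
    apply Measurable.ite measurableSet_Ioo measurable_const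
    apply Measurable.ite measurableSet_Ioo measurable_const
    apply Measurable.ite measurableSet_Ioo measurable_const
    exact measurable_const
  -- evaluation lemmas for ρ
  have hρ_0 : ∀ y, y ≤ b0 → ρ y = 0 := by
    intro y hy; simp only [hρ]
    rw [if_neg (by rw [Set.mem_Ioo]; rintro ⟨p, q⟩; linarith),
        if_neg (by rw [Set.mem_Ioo]; rintro ⟨p, q⟩; linarith),
        if_neg (by rw [Set.mem_Ioo]; rintro ⟨p, q⟩; linarith),
        if_neg (by rw [Set.mem_Ioo]; rintro ⟨p, q⟩; linarith),
        if_neg (by rw [Set.mem_Ioo]; rintro ⟨p, q⟩; linarith),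
        if_neg (by rw [Set.mem_Ioo]; rintro ⟨p, q⟩; linarith),
        if_neg (by rw [Set.mem_Ioo]; rintro ⟨p, q⟩; linarith),
        if_neg (by rw [Set.mem_Ioo]; rintro ⟨p, q⟩; linarith)]
  have hρ_9 : ∀ y, β ≤ y → ρ y = 0 := by
    intro y hy; simp only [hρ]
    rw [if_neg (by rw [Set.mem_Ioo]; rintro ⟨p, q⟩; linarith),
        if_neg (by rw [Set.mem_Ioo]; rintro ⟨p, q⟩; linarith),
        if_neg (by rw [Set.mem_Ioo]; rintro ⟨p, q⟩; linarith),
        if_neg (by rw [Set.mem_Ioo]; rintro ⟨p, q⟩; linarith),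
        if_neg (by rw [Set.mem_Ioo]; rintro ⟨p, q⟩; linarith),
        if_neg (by rw [Set.mem_Ioo]; rintro ⟨p, q⟩; linarith),
        if_neg (by rw [Set.mem_Ioo]; rintro ⟨p, q⟩; linarith),
        if_neg (by rw [Set.mem_Ioo]; rintro ⟨p, q⟩; linarith)]
  have hρ_1 : ∀ y, b0 < y → y < b1 → ρ y = ENNReal.ofReal (A / φ ^ 3) := by
    intro y hy1 hy2; simp only [hρ]
    rw [if_pos (Set.mem_Ioo.mpr ⟨hy1, hy2⟩)]
  have hρ_2 : ∀ y, b1 < y → y < b2 → ρ y = ENNReal.ofReal (A / φ ^ 2) := by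
    intro y hy1 hy2; simp only [hρ]
    rw [if_neg (by rw [Set.mem_Ioo]; rintro ⟨p, q⟩; linarith),
        if_pos (Set.mem_Ioo.mpr ⟨hy1, hy2⟩)]
  have hρ_3 : ∀ y, b2 < y → y < b3 → ρ y = ENNReal.ofReal (A / φ) := by
    intro y hy1 hy2; simp only [hρ]
    rw [if_neg (by rw [Set.mem_Ioo]; rintro ⟨p, q⟩; linarith),
        if_neg (by rw [Set.mem_Ioo]; rintro ⟨p, q⟩; linarith),
        if_pos (Set.mem_Ioo.mpr ⟨hy1, hy2⟩)]
  have hρ_4 : ∀ y, b3 < y → y < b4 → ρ y = ENNReal.ofReal A := by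
    intro y hy1 hy2; simp only [hρ]
    rw [if_neg (by rw [Set.mem_Ioo]; rintro ⟨p, q⟩; linarith),
        if_neg (by rw [Set.mem_Ioo]; rintro ⟨p, q⟩; linarith),
        if_neg (by rw [Set.mem_Ioo]; rintro ⟨p, q⟩; linarith),
        if_pos (Set.mem_Ioo.mpr ⟨hy1, hy2⟩)]
  have hρ_5 : ∀ y, b4 < y → y < b5 → ρ y = ENNReal.ofReal A := by
    intro y hy1 hy2; simp only [hρ]
    rw [if_neg (by rw [Set.mem_Ioo]; rintro ⟨p, q⟩; linarith),
        if_neg (by rw [Set.mem_Ioo]; rintro ⟨p, q⟩; linarith),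
        if_neg (by rw [Set.mem_Ioo]; rintro ⟨p, q⟩; linarith),
        if_neg (by rw [Set.mem_Ioo]; rintro ⟨p, q⟩; linarith),
        if_pos (Set.mem_Ioo.mpr ⟨hy1, hy2⟩)]
  have hρ_6 : ∀ y, b5 < y → y < 2 → ρ y = ENNReal.ofReal ((1 / φ ^ 3 + 1) * A) := by
    intro y hy1 hy2; simp only [hρ]
    rw [if_neg (by rw [Set.mem_Ioo]; rintro ⟨p, q⟩; linarith),
        if_neg (by rw [Set.mem_Ioo]; rintro ⟨p, q⟩; linarith),
        if_neg (by rw [Set.mem_Ioo]; rintro ⟨p, q⟩; linarith),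
        if_neg (by rw [Set.mem_Ioo]; rintro ⟨p, q⟩; linarith),
        if_neg (by rw [Set.mem_Ioo]; rintro ⟨p, q⟩; linarith),
        if_pos (Set.mem_Ioo.mpr ⟨hy1, hy2⟩)]
  have hρ_7 : ∀ y, 2 < y → y < b7 → ρ y = ENNReal.ofReal (A / φ) := by
    intro y hy1 hy2; simp only [hρ]
    rw [if_neg (by rw [Set.mem_Ioo]; rintro ⟨p, q⟩; linarith),
        if_neg (by rw [Set.mem_Ioo]; rintro ⟨p, q⟩; linarith),
        if_neg (by rw [Set.mem_Ioo]; rintro ⟨p, q⟩; linarith),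
        if_neg (by rw [Set.mem_Ioo]; rintro ⟨p, q⟩; linarith),
        if_neg (by rw [Set.mem_Ioo]; rintro ⟨p, q⟩; linarith),
        if_neg (by rw [Set.mem_Ioo]; rintro ⟨p, q⟩; linarith),
        if_pos (Set.mem_Ioo.mpr ⟨hy1, hy2⟩)]
  have hρ_8 : ∀ y, b7 < y → y < β → ρ y = ENNReal.ofReal (A / φ ^ 2) := by
    intro y hy1 hy2; simp only [hρ]
    rw [if_neg (by rw [Set.mem_Ioo]; rintro ⟨p, q⟩; linarith),
        if_neg (by rw [Set.mem_Ioo]; rintro ⟨p, q⟩; linarith),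
        if_neg (by rw [Set.mem_Ioo]; rintro ⟨p, q⟩; linarith),
        if_neg (by rw [Set.mem_Ioo]; rintro ⟨p, q⟩; linarith),
        if_neg (by rw [Set.mem_Ioo]; rintro ⟨p, q⟩; linarith),
        if_neg (by rw [Set.mem_Ioo]; rintro ⟨p, q⟩; linarith),
        if_neg (by rw [Set.mem_Ioo]; rintro ⟨p, q⟩; linarith),
        if_pos (Set.mem_Ioo.mpr ⟨hy1, hy2⟩)]
  constructor
  · -- probability measure
    have hρsum : ρ = fun x =>
        (Ioo b0 b1).indicator (fun _ => ENNReal.ofReal (A / φ ^ 3)) x +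
        ((Ioo b1 b2).indicator (fun _ => ENNReal.ofReal (A / φ ^ 2)) x +
        ((Ioo b2 b3).indicator (fun _ => ENNReal.ofReal (A / φ)) x +
        ((Ioo b3 b4).indicator (fun _ => ENNReal.ofReal A) x +
        ((Ioo b4 b5).indicator (fun _ => ENNReal.ofReal A) x +
        ((Ioo b5 2).indicator (fun _ => ENNReal.ofReal ((1 / φ ^ 3 + 1) * A)) x +
        ((Ioo 2 b7).indicator (fun _ => ENNReal.ofReal (A / φ)) x +
        (Ioo b7 β).indicator (fun _ => ENNReal.ofReal (A / φ ^ 2)) x)))))) := by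
      funext x
      simp only [hρ]
      by_cases h1 : x ∈ Ioo b0 b1
      · obtain ⟨ha, hb⟩ := h1
        rw [if_pos (Set.mem_Ioo.mpr ⟨ha, hb⟩), Set.indicator_of_mem (Set.mem_Ioo.mpr ⟨ha, hb⟩),
            Set.indicator_of_notMem (by rw [Set.mem_Ioo]; rintro ⟨p, q⟩; linarith),
            Set.indicator_of_notMem (by rw [Set.mem_Ioo]; rintro ⟨p, q⟩; linarith),
            Set.indicator_of_notMem (by rw [Set.mem_Ioo]; rintro ⟨p, q⟩; linarith),
            Set.indicator_of_notMem (by rw [Set.mem_Ioo]; rintro ⟨p, q⟩; linarith),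
            Set.indicator_of_notMem (by rw [Set.mem_Ioo]; rintro ⟨p, q⟩; linarith),
            Set.indicator_of_notMem (by rw [Set.mem_Ioo]; rintro ⟨p, q⟩; linarith),
            Set.indicator_of_notMem (by rw [Set.mem_Ioo]; rintro ⟨p, q⟩; linarith)]
        simp
      rw [if_neg h1, Set.indicator_of_notMem h1, zero_add]
      by_cases h2 : x ∈ Ioo b1 b2
      · obtain ⟨ha, hb⟩ := h2
        rw [if_pos (Set.mem_Ioo.mpr ⟨ha, hb⟩), Set.indicator_of_mem (Set.mem_Ioo.mpr ⟨ha, hb⟩),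
            Set.indicator_of_notMem (by rw [Set.mem_Ioo]; rintro ⟨p, q⟩; linarith),
            Set.indicator_of_notMem (by rw [Set.mem_Ioo]; rintro ⟨p, q⟩; linarith),
            Set.indicator_of_notMem (by rw [Set.mem_Ioo]; rintro ⟨p, q⟩; linarith),
            Set.indicator_of_notMem (by rw [Set.mem_Ioo]; rintro ⟨p, q⟩; linarith),
            Set.indicator_of_notMem (by rw [Set.mem_Ioo]; rintro ⟨p, q⟩; linarith),
            Set.indicator_of_notMem (by rw [Set.mem_Ioo]; rintro ⟨p, q⟩; linarith)]
        simp
      rw [if_neg h2, Set.indicator_of_notMem h2, zero_add]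
      by_cases h3 : x ∈ Ioo b2 b3
      · obtain ⟨ha, hb⟩ := h3
        rw [if_pos (Set.mem_Ioo.mpr ⟨ha, hb⟩), Set.indicator_of_mem (Set.mem_Ioo.mpr ⟨ha, hb⟩),
            Set.indicator_of_notMem (by rw [Set.mem_Ioo]; rintro ⟨p, q⟩; linarith),
            Set.indicator_of_notMem (by rw [Set.mem_Ioo]; rintro ⟨p, q⟩; linarith),
            Set.indicator_of_notMem (by rw [Set.mem_Ioo]; rintro ⟨p, q⟩; linarith),
            Set.indicator_of_notMem (by rw [Set.mem_Ioo]; rintro ⟨p, q⟩; linarith),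
            Set.indicator_of_notMem (by rw [Set.mem_Ioo]; rintro ⟨p, q⟩; linarith)]
        simp
      rw [if_neg h3, Set.indicator_of_notMem h3, zero_add]
      by_cases h4 : x ∈ Ioo b3 b4
      · obtain ⟨ha, hb⟩ := h4
        rw [if_pos (Set.mem_Ioo.mpr ⟨ha, hb⟩), Set.indicator_of_mem (Set.mem_Ioo.mpr ⟨ha, hb⟩),
            Set.indicator_of_notMem (by rw [Set.mem_Ioo]; rintro ⟨p, q⟩; linarith),
            Set.indicator_of_notMem (by rw [Set.mem_Ioo]; rintro ⟨p, q⟩; linarith),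
            Set.indicator_of_notMem (by rw [Set.mem_Ioo]; rintro ⟨p, q⟩; linarith),
            Set.indicator_of_notMem (by rw [Set.mem_Ioo]; rintro ⟨p, q⟩; linarith)]
        simp
      rw [if_neg h4, Set.indicator_of_notMem h4, zero_add]
      by_cases h5' : x ∈ Ioo b4 b5
      · obtain ⟨ha, hb⟩ := h5'
        rw [if_pos (Set.mem_Ioo.mpr ⟨ha, hb⟩), Set.indicator_of_mem (Set.mem_Ioo.mpr ⟨ha, hb⟩),
            Set.indicator_of_notMem (by rw [Set.mem_Ioo]; rintro ⟨p, q⟩; linarith),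
            Set.indicator_of_notMem (by rw [Set.mem_Ioo]; rintro ⟨p, q⟩; linarith),
            Set.indicator_of_notMem (by rw [Set.mem_Ioo]; rintro ⟨p, q⟩; linarith)]
        simp
      rw [if_neg h5', Set.indicator_of_notMem h5', zero_add]
      by_cases h6 : x ∈ Ioo b5 2
      · obtain ⟨ha, hb⟩ := h6
        rw [if_pos (Set.mem_Ioo.mpr ⟨ha, hb⟩), Set.indicator_of_mem (Set.mem_Ioo.mpr ⟨ha, hb⟩),
            Set.indicator_of_notMem (by rw [Set.mem_Ioo]; rintro ⟨p, q⟩; linarith),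
            Set.indicator_of_notMem (by rw [Set.mem_Ioo]; rintro ⟨p, q⟩; linarith)]
        simp
      rw [if_neg h6, Set.indicator_of_notMem h6, zero_add]
      by_cases h7 : x ∈ Ioo (2:ℝ) b7
      · obtain ⟨ha, hb⟩ := h7
        rw [if_pos (Set.mem_Ioo.mpr ⟨ha, hb⟩), Set.indicator_of_mem (Set.mem_Ioo.mpr ⟨ha, hb⟩),
            Set.indicator_of_notMem (by rw [Set.mem_Ioo]; rintro ⟨p, q⟩; linarith)]
        simp
      rw [if_neg h7, Set.indicator_of_notMem h7, zero_add]
      by_cases h8 : x ∈ Ioo b7 β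
      · rw [if_pos h8, Set.indicator_of_mem h8]
      · rw [if_neg h8, Set.indicator_of_notMem h8]
    constructor
    rw [hμ, withDensity_apply _ MeasurableSet.univ, Measure.restrict_univ, hρsum]
    rw [lintegral_add_left (measurable_const.indicator measurableSet_Ioo),
        lintegral_add_left (measurable_const.indicator measurableSet_Ioo),
        lintegral_add_left (measurable_const.indicator measurableSet_Ioo),
        lintegral_add_left (measurable_const.indicator measurableSet_Ioo),
        lintegral_add_left (measurable_const.indicator measurableSet_Ioo),
        lintegral_add_left (measurable_const.indicator measurableSet_Ioo),
        lintegral_add_left (measurable_const.indicator measurableSet_Ioo)]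
    simp only [lintegral_indicator measurableSet_Ioo, setLIntegral_const, Real.volume_Ioo]
    rw [← ENNReal.ofReal_mul (by positivity), ← ENNReal.ofReal_mul (by positivity),
        ← ENNReal.ofReal_mul (by positivity), ← ENNReal.ofReal_mul (by positivity),
        ← ENNReal.ofReal_mul (by positivity), ← ENNReal.ofReal_mul (by positivity),
        ← ENNReal.ofReal_mul (by positivity), ← ENNReal.ofReal_mul (by positivity)]
    have hl1 : (0:ℝ) ≤ A / φ ^ 3 * (b1 - b0) := mul_nonneg (by positivity) (by linarith)
    have hl2 : (0:ℝ) ≤ A / φ ^ 2 * (b2 - b1) := mul_nonneg (by positivity) (by linarith)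
    have hl3 : (0:ℝ) ≤ A / φ * (b3 - b2) := mul_nonneg (by positivity) (by linarith)
    have hl4 : (0:ℝ) ≤ A * (b4 - b3) := mul_nonneg (by positivity) (by linarith)
    have hl5 : (0:ℝ) ≤ A * (b5 - b4) := mul_nonneg (by positivity) (by linarith)
    have hl6 : (0:ℝ) ≤ (1 / φ ^ 3 + 1) * A * (2 - b5) := mul_nonneg (by positivity) (by linarith)
    have hl7 : (0:ℝ) ≤ A / φ * (b7 - 2) := mul_nonneg (by positivity) (by linarith)
    have hl8 : (0:ℝ) ≤ A / φ ^ 2 * (β - b7) := mul_nonneg (by positivity) (by linarith)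
    rw [← ENNReal.ofReal_add hl7 hl8,
        ← ENNReal.ofReal_add hl6 (add_nonneg hl7 hl8),
        ← ENNReal.ofReal_add hl5 (add_nonneg hl6 (add_nonneg hl7 hl8)),
        ← ENNReal.ofReal_add hl4 (add_nonneg hl5 (add_nonneg hl6 (add_nonneg hl7 hl8))),
        ← ENNReal.ofReal_add hl3 (add_nonneg hl4 (add_nonneg hl5 (add_nonneg hl6 (add_nonneg hl7 hl8)))),
        ← ENNReal.ofReal_add hl2 (add_nonneg hl3 (add_nonneg hl4 (add_nonneg hl5 (add_nonneg hl6 (add_nonneg hl7 hl8))))),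
        ← ENNReal.ofReal_add hl1 (add_nonneg hl2 (add_nonneg hl3 (add_nonneg hl4 (add_nonneg hl5 (add_nonneg hl6 (add_nonneg hl7 hl8)))))),
        ← ENNReal.ofReal_one]
    congr 1
    rw [f1, f2, f3, f6]
    rw [hb2, hb5, hb7, hb1, hb4, hb3, hb0]
    linear_combination hAid + A * (4 * φ + 4 * β - 16) * hφ2
  · -- invariance
    have hTmeas : Measurable T := by
      rw [hT]
      exact Measurable.ite measurableSet_Iic (measurable_id.add_const 2)
        (measurable_const.sub (measurable_id.const_mul φ))
    have hres : μ = μ.restrict (Iic 0) + μ.restrict (Ioi 0) := by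
      have h := Measure.restrict_add_restrict_compl (μ := μ) (measurableSet_Iic (a := (0:ℝ)))
      rw [Set.compl_Iic] at h
      exact h.symm
    have hg1m : Measurable (fun y : ℝ => (Iic (0:ℝ)).indicator ρ (y - 2)) :=
      (hρm.indicator measurableSet_Iic).comp (measurable_id.sub_const 2)
    have hg2m : Measurable (fun y : ℝ => (Ioi (0:ℝ)).indicator ρ ((β - y) / φ)) :=
      (hρm.indicator measurableSet_Ioi).comp ((measurable_const.sub measurable_id).div_const φ)
    have hmap1 : Measure.map (fun x : ℝ => x + 2) volume = volume :=
      map_add_right_eq_self volume 2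
    have hmap2 : Measure.map (fun x : ℝ => β - φ * x) volume
        = ENNReal.ofReal φ⁻¹ • volume := by
      have hcomp : (fun x : ℝ => β - φ * x) = (fun y : ℝ => β + y) ∘ (fun x : ℝ => -φ * x) := by
        funext x; simp [Function.comp]; ring
      rw [hcomp, ← Measure.map_map (measurable_const_add β) (measurable_const_mul (-φ)),
          Real.map_volume_mul_left (neg_ne_zero.mpr hφne), Measure.map_smul,
          map_add_left_eq_self volume β]
      congr 1
      rw [abs_inv, abs_neg, abs_of_pos hφpos]
    have hpart1 : (μ.restrict (Iic 0)).map T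
        = volume.withDensity (fun y => (Iic (0:ℝ)).indicator ρ (y - 2)) := by
      have hae1 : T =ᶠ[ae (μ.restrict (Iic 0))] fun x => x + 2 := by
        filter_upwards [ae_restrict_mem measurableSet_Iic] with x hx
        simp only [hT]
        exact if_pos (Set.mem_Iic.mp hx)
      rw [Measure.map_congr hae1, hμ, restrict_withDensity measurableSet_Iic, ← withDensity_indicator measurableSet_Iic,
          map_withDensity_aux (fun x => x + 2) (fun y => y - 2) (measurable_id.add_const 2)
            (measurable_id.sub_const 2) (fun x => by ring) volume _
            (hρm.indicator measurableSet_Iic), hmap1]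
    have hpart2 : (μ.restrict (Ioi 0)).map T
        = volume.withDensity
            (ENNReal.ofReal φ⁻¹ • fun y => (Ioi (0:ℝ)).indicator ρ ((β - y) / φ)) := by
      have hae2 : T =ᶠ[ae (μ.restrict (Ioi 0))] fun x => β - φ * x := by
        filter_upwards [ae_restrict_mem measurableSet_Ioi] with x hx
        simp only [hT]
        exact if_neg (not_le.mpr (Set.mem_Ioi.mp hx))
      rw [Measure.map_congr hae2, hμ, restrict_withDensity measurableSet_Ioi, ← withDensity_indicator measurableSet_Ioi,
          map_withDensity_aux (fun x => β - φ * x) (fun y => (β - y) / φ)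
            (measurable_const.sub (measurable_id.const_mul φ))
            ((measurable_const.sub measurable_id).div_const φ)
            (fun x => by field_simp; ring) volume _
            (hρm.indicator measurableSet_Ioi), hmap2, withDensity_smul_measure,
          ← withDensity_smul _ hg2m]
    conv_lhs => rw [hres]
    rw [Measure.map_add _ _ hTmeas, hpart1, hpart2, ← withDensity_add_left hg1m, hμ]
    apply withDensity_congr_ae
    have hS : volume ({b0, b1, b2, b3, b4, b5, 2, b7, β, β - φ * b4} : Set ℝ) = 0 :=
      Set.Finite.measure_zero (Set.toFinite _) volume
    have hae := measure_eq_zero_iff_ae_notMem.mp hS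
    filter_upwards [hae] with x hx
    simp only [Set.mem_insert_iff, Set.mem_singleton_iff, not_or] at hx
    obtain ⟨hxb0, hxb1, hxb2, hxb3, hxb4, hxb5, hx2, hxb7, hxβ, hxc⟩ := hx
    simp only [Pi.add_apply, Pi.smul_apply, smul_eq_mul]
    rcases Ne.lt_or_gt hxb0 with h0 | h0
    · -- x < b0
      rw [Set.indicator_of_mem (Set.mem_Iic.mpr (by linarith : x - 2 ≤ 0)),
          hρ_0 _ (by linarith : x - 2 ≤ b0),
          Set.indicator_of_mem (Set.mem_Ioi.mpr (div_pos (by linarith) hφpos)),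
          hρ_9 _ (by rw [le_div_iff₀ hφpos]; linarith),
          hρ_0 x h0.le]
      simp
    rcases Ne.lt_or_gt hxb1 with h1 | h1
    · -- b0 < x < b1
      rw [Set.indicator_of_mem (Set.mem_Iic.mpr (by linarith : x - 2 ≤ 0)),
          hρ_0 _ (by linarith : x - 2 ≤ b0),
          Set.indicator_of_mem (Set.mem_Ioi.mpr (div_pos (by linarith) hφpos)),
          hρ_8 _ (by rw [lt_div_iff₀ hφpos]; linarith) (by rw [div_lt_iff₀ hφpos]; linarith),
          hρ_1 x h0 h1, zero_add, ← ENNReal.ofReal_mul (by positivity)]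
      congr 1
      rw [hinv, f1, f2]
      linear_combination (-A) * hφ2
    rcases Ne.lt_or_gt hxb2 with h2 | h2
    · -- b1 < x < b2
      rw [Set.indicator_of_mem (Set.mem_Iic.mpr (by linarith : x - 2 ≤ 0)),
          hρ_0 _ (by linarith : x - 2 ≤ b0),
          Set.indicator_of_mem (Set.mem_Ioi.mpr (div_pos (by linarith) hφpos)),
          hρ_7 _ (by rw [lt_div_iff₀ hφpos]; linarith) (by rw [div_lt_iff₀ hφpos]; linarith),
          hρ_2 x h1 h2, zero_add, ← ENNReal.ofReal_mul (by positivity)]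
      congr 1
      rw [hinv, f3, f2]
      linear_combination A * hφ2
    rcases Ne.lt_or_gt hxb3 with h3 | h3
    · -- b2 < x < b3
      rw [Set.indicator_of_mem (Set.mem_Iic.mpr (by linarith : x - 2 ≤ 0)),
          hρ_1 _ (by linarith) (by linarith),
          Set.indicator_of_mem (Set.mem_Ioi.mpr (div_pos (by linarith) hφpos)),
          hρ_7 _ (by rw [lt_div_iff₀ hφpos]; linarith) (by rw [div_lt_iff₀ hφpos]; linarith),
          hρ_3 x h2 h3, ← ENNReal.ofReal_mul (by positivity),
          ← ENNReal.ofReal_add (by positivity) (by positivity)]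
      congr 1
      rw [hinv, f1, f3]
      linear_combination A * hφ2
    rcases Ne.lt_or_gt hxb4 with h4 | h4
    · -- b3 < x < b4
      rw [Set.indicator_of_mem (Set.mem_Iic.mpr (by linarith : x - 2 ≤ 0)),
          hρ_1 _ (by linarith) (by linarith),
          Set.indicator_of_mem (Set.mem_Ioi.mpr (div_pos (by linarith) hφpos)),
          hρ_6 _ (by rw [lt_div_iff₀ hφpos]; linarith) (by rw [div_lt_iff₀ hφpos]; linarith),
          hρ_4 x h3 h4, ← ENNReal.ofReal_mul (by positivity),
          ← ENNReal.ofReal_add (by positivity) (by positivity)]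
      congr 1
      rw [hinv, f1, f6]
      linear_combination 2 * A * hφ2
    rcases Ne.lt_or_gt hxb5 with h5' | h5'
    · -- b4 < x < b5
      rw [Set.indicator_of_mem (Set.mem_Iic.mpr (by linarith : x - 2 ≤ 0)),
          hρ_2 _ (by linarith) (by linarith),
          Set.indicator_of_mem (Set.mem_Ioi.mpr (div_pos (by linarith) hφpos)),
          hρ_5 _ (by rw [lt_div_iff₀ hφpos]; linarith) (by rw [div_lt_iff₀ hφpos]; linarith),
          hρ_5 x h4 h5', ← ENNReal.ofReal_mul (by positivity),
          ← ENNReal.ofReal_add (by positivity) (by positivity)]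
      congr 1
      rw [hinv, f2]
      ring
    rcases Ne.lt_or_gt hx2 with h6 | h6
    · -- b5 < x < 2
      have hval : ρ ((β - x) / φ) = ENNReal.ofReal A := by
        rcases Ne.lt_or_gt hxc with hc | hc
        · exact hρ_5 _ (by rw [lt_div_iff₀ hφpos]; linarith) (by rw [div_lt_iff₀ hφpos]; linarith)
        · exact hρ_4 _ (by rw [lt_div_iff₀ hφpos]; linarith) (by rw [div_lt_iff₀ hφpos]; linarith)
      rw [Set.indicator_of_mem (Set.mem_Iic.mpr (by linarith : x - 2 ≤ 0)),
          hρ_3 _ (by linarith) (by linarith),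
          Set.indicator_of_mem (Set.mem_Ioi.mpr (div_pos (by linarith) hφpos)),
          hval, hρ_6 x h5' h6, ← ENNReal.ofReal_mul (by positivity),
          ← ENNReal.ofReal_add (by positivity) (by positivity)]
      congr 1
      rw [hinv, f3, f6]
      ring
    rcases Ne.lt_or_gt hxb7 with h7 | h7
    · -- 2 < x < b7
      have hval : ρ ((β - x) / φ) = ENNReal.ofReal A := by
        rcases Ne.lt_or_gt hxc with hc | hc
        · exact hρ_5 _ (by rw [lt_div_iff₀ hφpos]; linarith) (by rw [div_lt_iff₀ hφpos]; linarith)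
        · exact hρ_4 _ (by rw [lt_div_iff₀ hφpos]; linarith) (by rw [div_lt_iff₀ hφpos]; linarith)
      rw [Set.indicator_of_notMem (by simp only [Set.mem_Iic, not_le]; linarith),
          Set.indicator_of_mem (Set.mem_Ioi.mpr (div_pos (by linarith) hφpos)),
          hval, hρ_7 x h6 h7, zero_add, ← ENNReal.ofReal_mul (by positivity)]
      congr 1
      rw [hinv, f3]
      ring
    rcases Ne.lt_or_gt hxβ with h8 | h8
    · -- b7 < x < β
      have hu : 0 < (β - x) / φ := div_pos (by linarith) hφpos
      rw [Set.indicator_of_notMem (by simp only [Set.mem_Iic, not_le]; linarith),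
          Set.indicator_of_mem (Set.mem_Ioi.mpr hu),
          hρ_3 _ (by linarith) (by rw [div_lt_iff₀ hφpos]; linarith),
          hρ_8 x h7 h8, zero_add, ← ENNReal.ofReal_mul (by positivity)]
      congr 1
      rw [hinv, f3, f2]
      linear_combination A * hφ2
    · -- β < x
      rw [Set.indicator_of_notMem (by simp only [Set.mem_Iic, not_le]; linarith),
          Set.indicator_of_notMem
            (by simp only [Set.mem_Ioi, not_lt]; rw [div_le_iff₀ hφpos]; linarith),
          hρ_9 x h8.le]
      simp
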